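/- Fix n, and let E := {e : Sym2 (Fin n) // ¬ e.IsDiag} with the action of Equiv.Perm (Fin n) given by σ • e = Sym2.map σ e; let m := Fintype.card E = n(n-1)/2. For each i ≤ m let a_{n,i} be the number of isomorphism classes of simple graphs on Fin n with exactly i edges (the cardinality of the quotient of {G : SimpleGraph (Fin n) // G.edgeFinset.card = i} by G ~ G' ↔ Nonempty (G ≃g G')). For σ ∈ Equiv.Perm (Fin n), let P σ : Matrix E E (RatFunc ℚ) be the permutation matrix of the permutation e ↦ σ • e of E. Then, in the field of rational functions RatFunc ℚ with variable X: (n! : RatFunc ℚ) * ∑_{i=0}^{m} (a_{n,i} : RatFunc ℚ) * X^i = ∑_{σ ∈ Equiv.Perm (Fin n)} det(1 - X^2 • P σ) / det(1 - X • P σ), where 1 denotes the identity m×m matrix and each denominator det(1 - X • P σ) is nonzero. -/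

import Mathlib

set_option maxHeartbeats 1000000
set_option synthInstance.maxHeartbeats 400000

/-- The set of potential edges on `n` vertices: unordered pairs of distinct elements
of `Fin n`. -/
abbrev Edges (n : ℕ) : Type := {e : Sym2 (Fin n) // ¬ e.IsDiag}

/-- The action of a permutation `σ` of the vertices on the set of potential edges,
`σ • e = Sym2.map σ e`. -/
def edgePerm {n : ℕ} (σ : Equiv.Perm (Fin n)) : Equiv.Perm (Edges n) where
  toFun e := ⟨Sym2.map σ e.1, fun h => e.2 ((Sym2.isDiag_map σ.injective).mp h)⟩
  invFun e := ⟨Sym2.map σ.symm e.1, fun h => e.2 ((Sym2.isDiag_map σ.symm.injective).mp h)⟩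
  left_inv e := Subtype.ext (by simp [Sym2.map_map])
  right_inv e := Subtype.ext (by simp [Sym2.map_map])

/-- The permutation matrix (with entries in a semiring `R`) of the permutation
`e ↦ σ • e` of the edge set induced by a vertex permutation `σ`. -/
def permMat (n : ℕ) (R : Type*) [Semiring R] (σ : Equiv.Perm (Fin n)) :
    Matrix (Edges n) (Edges n) R :=
  Matrix.of fun e f => if edgePerm σ f = e then 1 else 0

open scoped Classical in
/-- Isomorphism of simple graphs with `n` vertices and `i` edges, as an equivalence
relation. -/
noncomputable def graphIsoSetoid (n i : ℕ) :
    Setoid {G : SimpleGraph (Fin n) // G.edgeFinset.card = i} where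
  r G G' := Nonempty (G.1 ≃g G'.1)
  iseqv := ⟨fun _ => ⟨RelIso.refl _⟩, fun ⟨φ⟩ => ⟨φ.symm⟩, fun ⟨φ⟩ ⟨ψ⟩ => ⟨φ.trans ψ⟩⟩

set_option linter.unusedSectionVars false

/-! ### General theory: permutation matrices and invariant subsets -/

section GeneralDefs

def pmat {F : Type} [Fintype F] [DecidableEq F] (R : Type*) [Semiring R] (π : Equiv.Perm F) :
    Matrix F F R :=
  Matrix.of fun i j => if π j = i then 1 else 0

def IsInv {F : Type} (π : Equiv.Perm F) (S : Finset F) : Prop := ∀ a, π a ∈ S ↔ a ∈ S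

instance {F : Type} [DecidableEq F] [Fintype F] (π : Equiv.Perm F) (S : Finset F) :
    Decidable (IsInv π S) := by unfold IsInv; infer_instance

def invSets {F : Type} [Fintype F] [DecidableEq F] (π : Equiv.Perm F) : Finset (Finset F) :=
  Finset.univ.filter (fun S => IsInv π S)

end GeneralDefs

section General
variable {F : Type} [Fintype F] [DecidableEq F]

lemma isInv_pow (π : Equiv.Perm F) {S : Finset F} (h : IsInv π S) (k : ℕ) :
    ∀ a, (π ^ k) a ∈ S ↔ a ∈ S := by
  induction k with
  | zero => simp
  | succ k ih => intro a; rw [pow_succ, Equiv.Perm.mul_apply, ih, h]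

lemma isInv_sameCycle (π : Equiv.Perm F) {S : Finset F} (h : IsInv π S) {x y : F}
    (hxy : π.SameCycle x y) (hx : x ∈ S) : y ∈ S := by
  obtain ⟨i, -, -, hi⟩ := hxy.exists_pow_eq π
  rw [← hi]; exact (isInv_pow π h i x).mpr hx

lemma single_orbit_invSets {π : Equiv.Perm F} (hcyc : ∀ y z : F, π.SameCycle y z)
    {S : Finset F} (h : IsInv π S) (hne : S.Nonempty) : S = Finset.univ := by
  obtain ⟨x, hx⟩ := hne
  ext y; simp only [Finset.mem_univ, iff_true]
  exact isInv_sameCycle π h (hcyc x y) hx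

lemma isInv_iff_image (π : Equiv.Perm F) (S : Finset F) :
    IsInv π S ↔ S.image π = S := by
  constructor
  · intro h
    apply Finset.eq_of_subset_of_card_le
    · intro x hx
      obtain ⟨j, hj, rfl⟩ := Finset.mem_image.mp hx
      exact (h j).mpr hj
    · rw [Finset.card_image_of_injective _ π.injective]
  · intro h a
    constructor
    · intro ha
      rw [← h] at ha
      obtain ⟨b, hb, hba⟩ := Finset.mem_image.mp ha
      rwa [π.injective hba] at hb
    · intro ha
      rw [← h]
      exact Finset.mem_image_of_mem π ha

lemma tau_eq (π τ : Equiv.Perm F) (hcyc : ∀ y z : F, π.SameCycle y z)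
    (h : ∀ j, τ j = j ∨ τ j = π j) : τ = 1 ∨ τ = π := by
  classical
  set S : Finset F := Finset.univ.filter (fun j => τ j = π j) with hS
  have hinv : IsInv π S := by
    have step : ∀ j ∈ S, π j ∈ S := by
      intro j hj
      simp only [hS, Finset.mem_filter, Finset.mem_univ, true_and] at hj ⊢
      rcases h (π j) with h1 | h2
      · have hpj : π j = j := τ.injective (h1.trans hj.symm)
        simpa [hpj] using hj
      · exact h2
    rw [isInv_iff_image]
    apply Finset.eq_of_subset_of_card_le
    · intro x hx; obtain ⟨j, hj, rfl⟩ := Finset.mem_image.mp hx; exact step j hj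
    · rw [Finset.card_image_of_injective _ π.injective]
  rcases S.eq_empty_or_nonempty with he | hne
  · left; ext j
    rcases h j with h1 | h2
    · simp [h1]
    · exfalso; have : j ∈ S := by simp [hS, h2]
      simp [he] at this
  · right
    have := single_orbit_invSets hcyc hinv hne
    ext j
    have : j ∈ S := this ▸ Finset.mem_univ j
    simpa [hS] using this

variable {R : Type*} [CommRing R]

lemma entry_apply (x : R) (π : Equiv.Perm F) (i j : F) :
    (1 - x • pmat R π) i j = (if i = j then 1 else 0) - x * (if π j = i then 1 else 0) := by
  simp [pmat, Matrix.sub_apply, Matrix.smul_apply, Matrix.one_apply, smul_eq_mul]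

lemma det_single_cycle (x : R) [Nonempty F] (π : Equiv.Perm F)
    (hcyc : ∀ y z : F, π.SameCycle y z) :
    (1 - x • pmat R π).det = 1 - x ^ (Fintype.card F) := by
  have htau : ∀ τ : Equiv.Perm F, (∀ j, τ j = j ∨ τ j = π j) → τ = 1 ∨ τ = π :=
    fun τ => tau_eq π τ hcyc
  by_cases hπ : π = 1
  · have hsub : Subsingleton F := by
      constructor; intro a b
      obtain ⟨k, hk⟩ := hcyc a b
      rw [hπ] at hk; simpa using hk
    obtain ⟨a⟩ := ‹Nonempty F›
    have hcard : Fintype.card F = 1 :=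
      Fintype.card_eq_one_iff.mpr ⟨a, fun b => Subsingleton.elim b a⟩
    have : Unique F := uniqueOfSubsingleton a
    rw [Matrix.det_unique, entry_apply, hπ, hcard]
    simp
  · have hnofix : ∀ j, π j ≠ j := by
      intro j hj
      apply hπ
      have hsub : ∀ z, z = j := by
        intro z
        obtain ⟨k, hk⟩ := hcyc j z
        rw [← hk, Equiv.Perm.zpow_apply_eq_self_of_apply_eq_self hj]
      ext z
      rw [hsub z, hj, Equiv.Perm.one_apply]
    have hiscyc : π.IsCycle := by
      obtain ⟨a⟩ := ‹Nonempty F›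
      exact ⟨a, hnofix a, fun y _ => hcyc a y⟩
    have hsupp : π.support = Finset.univ := by
      ext j; simp [Equiv.Perm.mem_support, hnofix j]
    have hsign : Equiv.Perm.sign π = -(-1) ^ (Fintype.card F) := by
      rw [hiscyc.sign, hsupp, Finset.card_univ]
    rw [Matrix.det_apply]
    rw [← Finset.sum_subset (Finset.subset_univ ({1, π} : Finset (Equiv.Perm F)))]
    · rw [Finset.sum_pair (Ne.symm hπ)]
      have t1 : (Equiv.Perm.sign (1 : Equiv.Perm F)) •
          ∏ i, (1 - x • pmat R π) ((1 : Equiv.Perm F) i) i = 1 := by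
        simp only [_root_.map_one, one_smul]
        rw [Finset.prod_eq_one]
        intro i _
        rw [entry_apply]
        simp [hnofix i]
      have t2 : (Equiv.Perm.sign π) • ∏ i, (1 - x • pmat R π) (π i) i =
          - x ^ (Fintype.card F) := by
        have : ∏ i, (1 - x • pmat R π) (π i) i = (-x) ^ (Fintype.card F) := by
          rw [← Finset.card_univ, ← Finset.prod_const]
          apply Finset.prod_congr rfl
          intro i _
          rw [entry_apply]
          simp [hnofix i]
        rw [this, hsign, Units.smul_def, zsmul_eq_mul]
        push_cast
        rw [neg_mul, ← mul_pow]
        simp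
      rw [t1, t2]; ring
    · intro τ _ hτ
      have : ∃ j, τ j ≠ j ∧ τ j ≠ π j := by
        by_contra hc
        push_neg at hc
        rcases htau τ (fun j => by
          rcases Classical.em (τ j = j) with h|h
          · exact Or.inl h
          · exact Or.inr (hc j h)) with h|h
        · exact hτ (by simp [h])
        · exact hτ (by simp [h])
      obtain ⟨j, hj1, hj2⟩ := this
      rw [Finset.prod_eq_zero (Finset.mem_univ j)]
      · simp
      · rw [entry_apply]; simp [hj1, Ne.symm hj2]

lemma hp' {π : Equiv.Perm F} {p : F → Prop} (hp : ∀ a, p a ↔ p (π a)) :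
    ∀ a, ¬ p a ↔ ¬ p (π a) := fun a => not_congr (hp a)

variable (x : R) (π : Equiv.Perm F) (O : Finset F) (hp : ∀ a, a ∈ O ↔ π a ∈ O)

lemma det_block :
    (1 - x • pmat R π).det =
      (1 - x • pmat R (π.subtypePerm (fun a => (hp a).symm))).det *
        (1 - x • pmat R (π.subtypePerm (p := fun a => ¬ a ∈ O) (fun a => (hp' hp a).symm))).det := by
  rw [← Matrix.det_submatrix_equiv_self (Equiv.sumCompl (fun a => a ∈ O)) (1 - x • pmat R π)]
  have : (1 - x • pmat R π).submatrix (Equiv.sumCompl (fun a => a ∈ O))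
        (Equiv.sumCompl (fun a => a ∈ O)) =
      Matrix.fromBlocks (1 - x • pmat R (π.subtypePerm (fun a => (hp a).symm))) 0 0
        (1 - x • pmat R (π.subtypePerm (p := fun a => ¬ a ∈ O) (fun a => (hp' hp a).symm))) := by
    ext i j
    rcases i with a | a <;> rcases j with b | b <;>
      simp only [Matrix.submatrix_apply, Equiv.sumCompl_apply_inl, Equiv.sumCompl_apply_inr,
        Matrix.fromBlocks_apply₁₁, Matrix.fromBlocks_apply₁₂, Matrix.fromBlocks_apply₂₁,
        Matrix.fromBlocks_apply₂₂, entry_apply, Matrix.zero_apply]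
    · congr 1
      · simp only [Subtype.ext_iff]
      · congr 1
        simp [Equiv.Perm.subtypePerm, Subtype.ext_iff]
    · have h1 : (a : F) ≠ b := fun h => b.2 (h ▸ a.2)
      have h2 : π (b : F) ≠ a := fun h => b.2 ((hp b).mpr (h ▸ a.2))
      simp [h1, h2]
    · have h1 : (a : F) ≠ b := fun h => a.2 (h ▸ b.2)
      have h2 : π (b : F) ≠ a := fun h => a.2 (h ▸ (hp b).mp b.2)
      simp [h1, h2]
    · congr 1
      · simp [Subtype.ext_iff]
      · congr 1
        simp [Equiv.Perm.subtypePerm, Subtype.ext_iff]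
  rw [this, Matrix.det_fromBlocks_zero₂₁]

lemma sum_block :
    ∑ S ∈ invSets π, x ^ S.card =
      (∑ S ∈ invSets (π.subtypePerm (fun a => (hp a).symm)), x ^ S.card) *
        ∑ S ∈ invSets (π.subtypePerm (p := fun a => ¬ a ∈ O) (fun a => (hp' hp a).symm)), x ^ S.card := by
  rw [Finset.sum_mul_sum, ← Finset.sum_product']
  apply Finset.sum_nbij'
    (i := fun S => (S.subtype (fun a => a ∈ O), S.subtype (fun a => ¬ a ∈ O)))
    (j := fun T => Finset.univ.filter (fun a => if h : a ∈ O then ⟨a, h⟩ ∈ T.1 else ⟨a, h⟩ ∈ T.2))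
  · intro S hS
    simp only [invSets, Finset.mem_filter, Finset.mem_univ, true_and] at hS
    simp only [Finset.mem_product, invSets, Finset.mem_filter, Finset.mem_univ, true_and]
    constructor
    · intro a
      simp only [Finset.mem_subtype]
      exact hS a.1
    · intro a
      simp only [Finset.mem_subtype]
      exact hS a.1
  · intro T hT
    simp only [Finset.mem_product, invSets, Finset.mem_filter, Finset.mem_univ, true_and] at hT
    simp only [invSets, Finset.mem_filter, Finset.mem_univ, true_and]
    intro a
    simp only [Finset.mem_filter, Finset.mem_univ, true_and]
    by_cases h : a ∈ O
    · have h2 : π a ∈ O := (hp a).mp h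
      rw [dif_pos h, dif_pos h2]
      exact hT.1 ⟨a, h⟩
    · have h2 : ¬ π a ∈ O := (hp' hp a).mp h
      rw [dif_neg h, dif_neg h2]
      exact hT.2 ⟨a, h⟩
  · intro S _
    ext a
    simp only [Finset.mem_filter, Finset.mem_univ, true_and]
    by_cases h : a ∈ O
    · rw [dif_pos h]; simp [Finset.mem_subtype]
    · rw [dif_neg h]; simp [Finset.mem_subtype]
  · intro T _
    ext a
    · simp only [Finset.mem_subtype, Finset.mem_filter, Finset.mem_univ, true_and, dif_pos a.2]
    · simp only [Finset.mem_subtype, Finset.mem_filter, Finset.mem_univ, true_and, dif_neg a.2]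
  · intro S _
    rw [← pow_add]
    congr 1
    rw [Finset.card_subtype, Finset.card_subtype, Finset.card_filter_add_card_filter_not]

end General

lemma key_empty {F : Type} [Fintype F] [DecidableEq F] [IsEmpty F] {R : Type*} [CommRing R]
    (x : R) (π : Equiv.Perm F) :
    (1 - x ^ 2 • pmat R π).det = (1 - x • pmat R π).det * ∑ S ∈ invSets π, x ^ S.card := by
  have hinv : invSets π = {(∅ : Finset F)} := by
    ext S
    have hS : S = ∅ := Finset.eq_empty_of_isEmpty S
    subst hS
    simp only [invSets, Finset.mem_filter, Finset.mem_univ, true_and, Finset.mem_singleton,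
      eq_self_iff_true, iff_true]
    intro a; exact isEmptyElim a
  rw [Matrix.det_isEmpty, Matrix.det_isEmpty, hinv]
  simp

theorem key {R : Type*} [CommRing R] (x : R) :
    ∀ (N : ℕ) (F : Type) [Fintype F] [DecidableEq F] (π : Equiv.Perm F),
      Fintype.card F ≤ N →
      (1 - x ^ 2 • pmat R π).det = (1 - x • pmat R π).det * ∑ S ∈ invSets π, x ^ S.card := by
  intro N
  induction N with
  | zero =>
      intro F _ _ π hcard
      have : IsEmpty F := Fintype.card_eq_zero_iff.mp (Nat.le_zero.mp hcard)
      exact key_empty x π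
  | succ N ih =>
      intro F _ _ π hcard
      rcases isEmpty_or_nonempty F with hF | hF
      · exact key_empty x π
      · set O : Finset F := Finset.univ.filter (π.SameCycle (Classical.arbitrary F)) with hOdef
        have hx₀ : Classical.arbitrary F ∈ O := by
          simp [hOdef, Equiv.Perm.SameCycle.refl]
        have hpinv : ∀ a, a ∈ O ↔ π a ∈ O := by
          intro a
          simp only [hOdef, Finset.mem_filter, Finset.mem_univ, true_and]
          exact (Equiv.Perm.sameCycle_apply_right).symm
        by_cases hO : O = Finset.univ
        · have hcyc : ∀ y z : F, π.SameCycle y z := by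
            intro y z
            have hy : π.SameCycle (Classical.arbitrary F) y := by
              have := hO ▸ Finset.mem_univ y
              simpa [hOdef] using this
            have hz : π.SameCycle (Classical.arbitrary F) z := by
              have := hO ▸ Finset.mem_univ z
              simpa [hOdef] using this
            exact hy.symm.trans hz
          rw [det_single_cycle x π hcyc, det_single_cycle (x ^ 2) π hcyc]
          have hsets : invSets π = {(∅ : Finset F), Finset.univ} := by
            ext S
            simp only [invSets, Finset.mem_filter, Finset.mem_univ, true_and,
              Finset.mem_insert, Finset.mem_singleton]
            constructor
            · intro h
              rcases S.eq_empty_or_nonempty with he | hne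
              · exact Or.inl he
              · exact Or.inr (single_orbit_invSets hcyc h hne)
            · rintro (rfl | rfl) <;> intro a <;> simp
          rw [hsets, Finset.sum_pair (by
            intro h
            exact (Finset.univ_nonempty (α := F)).ne_empty h.symm)]
          rw [Finset.card_empty, Finset.card_univ, pow_zero]
          rw [pow_right_comm]
          ring
        · have e1 : Fintype.card {a // a ∈ O} = O.card := Fintype.card_coe O
          have hlt : O.card < Fintype.card F := by
            rw [← Finset.card_univ]
            exact Finset.card_lt_card (Finset.ssubset_univ_iff.mpr hO)
          have hcard1 : Fintype.card {a // a ∈ O} ≤ N := by omega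
          have e2 : Fintype.card {a // ¬ a ∈ O} = Fintype.card F - O.card := by
            rw [Fintype.card_subtype_compl]
            congr 1
          have hpos : 1 ≤ O.card := Finset.card_pos.mpr ⟨_, hx₀⟩
          have hcard2 : Fintype.card {a // ¬ a ∈ O} ≤ N := by omega
          rw [det_block x π O hpinv, det_block (x ^ 2) π O hpinv, sum_block x π O hpinv]
          have k1 := ih _ (π.subtypePerm (fun a => (hpinv a).symm)) hcard1
          have k2 := ih _ (π.subtypePerm (p := fun a => ¬ a ∈ O) (fun a => (hp' hpinv a).symm)) hcard2
          rw [k1, k2]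
          ring

/-! ### non-vanishing of the denominators -/

lemma det_ne_zero {F : Type} [Fintype F] [DecidableEq F] (π : Equiv.Perm F) :
    (1 - (RatFunc.X : RatFunc ℚ) • pmat (RatFunc ℚ) π).det ≠ 0 := by
  set φ := algebraMap (Polynomial ℚ) (RatFunc ℚ) with hφ
  have hmap : (φ.mapMatrix (1 - (Polynomial.X : Polynomial ℚ) • pmat (Polynomial ℚ) π)) =
      1 - (RatFunc.X : RatFunc ℚ) • pmat (RatFunc ℚ) π := by
    ext i j
    simp only [RingHom.mapMatrix_apply, Matrix.map_apply, entry_apply]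
    rw [map_sub, map_mul]
    rw [apply_ite φ, apply_ite φ, _root_.map_one, _root_.map_zero, hφ, RatFunc.algebraMap_X]
  intro h
  rw [← hmap, ← RingHom.map_det] at h
  have h0 : (1 - (Polynomial.X : Polynomial ℚ) • pmat (Polynomial ℚ) π).det = 0 :=
    IsFractionRing.injective (Polynomial ℚ) (RatFunc ℚ) (by rw [h, _root_.map_zero])
  have heval := congrArg (Polynomial.evalRingHom (0 : ℚ)) h0
  rw [RingHom.map_det, _root_.map_zero] at heval
  have hone : (Polynomial.evalRingHom (0 : ℚ)).mapMatrix
      (1 - (Polynomial.X : Polynomial ℚ) • pmat (Polynomial ℚ) π) = 1 := by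
    ext i j
    simp only [RingHom.mapMatrix_apply, Matrix.map_apply, entry_apply, Matrix.one_apply]
    rw [map_sub, map_mul]
    rw [apply_ite (Polynomial.evalRingHom (0 : ℚ)), apply_ite (Polynomial.evalRingHom (0 : ℚ))]
    simp
  rw [hone, Matrix.det_one] at heval
  exact one_ne_zero heval

/-! ### generating function over invariant sets -/

lemma sum_inv_card {F : Type} [Fintype F] [DecidableEq F] {R : Type*} [CommRing R] (x : R)
    (π : Equiv.Perm F) (m : ℕ) (hm : Fintype.card F ≤ m) :
    ∑ i ∈ Finset.range (m + 1),
        ((((invSets π).filter (fun S => S.card = i)).card : R)) * x ^ i =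
      ∑ S ∈ invSets π, x ^ S.card := by
  have hmaps : ∀ S ∈ invSets π, S.card ∈ Finset.range (m + 1) := by
    intro S _
    have h1 : S.card ≤ Fintype.card F := by simpa using Finset.card_le_univ S
    exact Finset.mem_range.mpr (by omega)
  rw [← Finset.sum_fiberwise_of_maps_to hmaps]
  apply Finset.sum_congr rfl
  intro i _
  rw [Finset.sum_congr rfl (fun S hS => by
    rw [(Finset.mem_filter.mp hS).2]), Finset.sum_const, nsmul_eq_mul]

/-! ### the graph side -/

lemma edgePerm_one {n : ℕ} : edgePerm (1 : Equiv.Perm (Fin n)) = 1 := by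
  ext e
  simp [edgePerm, Subtype.ext_iff]

lemma edgePerm_mul {n : ℕ} (σ τ : Equiv.Perm (Fin n)) :
    edgePerm (σ * τ) = edgePerm σ * edgePerm τ := by
  ext e
  simp only [edgePerm, Equiv.coe_fn_mk, Equiv.Perm.mul_apply, Subtype.ext_iff,
    Sym2.map_map]
  rfl

open scoped Classical

noncomputable def graphEquiv (n : ℕ) : SimpleGraph (Fin n) ≃ Finset (Edges n) where
  toFun G := Finset.univ.filter (fun e => e.1 ∈ G.edgeSet)
  invFun S := SimpleGraph.fromEdgeSet {s | ∃ h : ¬ s.IsDiag, (⟨s, h⟩ : Edges n) ∈ S}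
  left_inv G := by
    ext v w
    simp only [SimpleGraph.fromEdgeSet_adj, Set.mem_setOf_eq, Finset.mem_filter,
      Finset.mem_univ, true_and]
    constructor
    · rintro ⟨⟨h, hmem⟩, hne⟩
      rwa [SimpleGraph.mem_edgeSet] at hmem
    · intro h
      exact ⟨⟨by simp [G.ne_of_adj h], by rwa [SimpleGraph.mem_edgeSet]⟩, G.ne_of_adj h⟩
  right_inv S := by
    ext e
    simp only [Finset.mem_filter, Finset.mem_univ, true_and,
      SimpleGraph.edgeSet_fromEdgeSet, Set.mem_diff, Set.mem_setOf_eq]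
    constructor
    · rintro ⟨⟨h, hmem⟩, -⟩
      convert hmem
    · intro h
      exact ⟨⟨e.2, by convert h⟩, e.2⟩

lemma edgeSet_map' {V W : Type*} (f : V ↪ W) (G : SimpleGraph V) :
    (G.map f).edgeSet = Sym2.map f '' G.edgeSet := by
  ext s
  constructor
  · induction s using Sym2.ind with
    | _ v w =>
      intro h
      rw [SimpleGraph.mem_edgeSet, SimpleGraph.map_adj] at h
      obtain ⟨a, b, hab, rfl, rfl⟩ := h
      exact ⟨s(a, b), hab, Sym2.map_pair_eq f a b⟩
  · rintro ⟨t, ht, rfl⟩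
    induction t using Sym2.ind with
    | _ a b =>
      rw [Sym2.map_pair_eq, SimpleGraph.mem_edgeSet, SimpleGraph.map_adj]
      exact ⟨a, b, ht, rfl, rfl⟩

lemma graphEquiv_card {n : ℕ} (G : SimpleGraph (Fin n)) [Fintype G.edgeSet] :
    G.edgeFinset.card = (graphEquiv n G).card := by
  apply Finset.card_bij
    (fun e he => (⟨e, G.not_isDiag_of_mem_edgeSet (SimpleGraph.mem_edgeFinset.mp he)⟩ : Edges n))
  · intro e he
    simp only [graphEquiv, Equiv.coe_fn_mk, Finset.mem_filter, Finset.mem_univ, true_and]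
    rwa [SimpleGraph.mem_edgeFinset] at he
  · intro a ha b hb h
    simpa [Subtype.ext_iff] using h
  · intro e he
    simp only [graphEquiv, Equiv.coe_fn_mk, Finset.mem_filter, Finset.mem_univ, true_and] at he
    exact ⟨e.1, by rwa [SimpleGraph.mem_edgeFinset], Subtype.ext rfl⟩

lemma graphEquiv_map {n : ℕ} (σ : Equiv.Perm (Fin n)) (G : SimpleGraph (Fin n)) :
    graphEquiv n (G.map σ.toEmbedding) = (graphEquiv n G).image (edgePerm σ) := by
  ext e
  simp only [graphEquiv, Equiv.coe_fn_mk, Finset.mem_filter, Finset.mem_univ, true_and,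
    Finset.mem_image, edgeSet_map', Set.mem_image]
  constructor
  · rintro ⟨a, ha, hae⟩
    have hand : ¬ a.IsDiag := G.not_isDiag_of_mem_edgeSet ha
    exact ⟨⟨a, hand⟩, ha, Subtype.ext hae⟩
  · rintro ⟨f, hf, rfl⟩
    exact ⟨f.1, hf, rfl⟩

lemma iso_iff_map {n : ℕ} (G G' : SimpleGraph (Fin n)) :
    Nonempty (G ≃g G') ↔ ∃ σ : Equiv.Perm (Fin n), G.map σ.toEmbedding = G' := by
  constructor
  · rintro ⟨φ⟩
    refine ⟨φ.toEquiv, ?_⟩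
    ext v w
    rw [SimpleGraph.map_adj]; simp only [Equiv.coe_toEmbedding]
    constructor
    · rintro ⟨a, b, hab, rfl, rfl⟩
      exact φ.map_adj_iff.mpr hab
    · intro h
      exact ⟨φ.toEquiv.symm v, φ.toEquiv.symm w, by
        have := φ.symm.map_adj_iff.mpr h
        exact this, by simp, by simp⟩
  · rintro ⟨σ, rfl⟩
    exact ⟨⟨σ, by
      intro a b
      rw [SimpleGraph.map_adj]; simp only [Equiv.coe_toEmbedding]
      constructor
      · rintro ⟨u, v, huv, hu, hv⟩
        rwa [σ.injective hu, σ.injective hv] at huv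
      · intro h
        exact ⟨a, b, h, rfl, rfl⟩⟩⟩

variable {n : ℕ}

instance : SMul (Equiv.Perm (Fin n)) (Finset (Edges n)) :=
  ⟨fun σ S => S.image (edgePerm σ)⟩

lemma finset_smul_def (σ : Equiv.Perm (Fin n)) (S : Finset (Edges n)) :
    σ • S = S.image (edgePerm σ) := rfl

instance : MulAction (Equiv.Perm (Fin n)) (Finset (Edges n)) where
  one_smul S := by
    rw [finset_smul_def, edgePerm_one]
    simp
  mul_smul σ τ S := by
    rw [finset_smul_def, finset_smul_def, finset_smul_def, edgePerm_mul, Finset.image_image]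
    rfl

abbrev GW (n i : ℕ) : Type := {S : Finset (Edges n) // S.card = i}

instance (i : ℕ) : MulAction (Equiv.Perm (Fin n)) (GW n i) where
  smul σ S := ⟨σ • S.1, by
    rw [finset_smul_def, Finset.card_image_of_injective _ (edgePerm σ).injective, S.2]⟩
  one_smul S := Subtype.ext (one_smul _ S.1)
  mul_smul σ τ S := Subtype.ext (mul_smul σ τ S.1)

lemma gw_smul_def (i : ℕ) (σ : Equiv.Perm (Fin n)) (S : GW n i) :
    (σ • S).1 = σ • S.1 := rfl

lemma card_fixedBy (i : ℕ) (σ : Equiv.Perm (Fin n)) :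
    Fintype.card (MulAction.fixedBy (GW n i) σ) =
      ((invSets (edgePerm σ)).filter (fun S => S.card = i)).card := by
  rw [← Fintype.card_coe]
  apply Fintype.card_congr
  have hmem : ∀ S : Finset (Edges n),
      S ∈ (invSets (edgePerm σ)).filter (fun S => S.card = i) ↔
        (IsInv (edgePerm σ) S ∧ S.card = i) := by
    intro S
    simp [invSets, Finset.mem_filter]
  refine
    { toFun := fun A => ⟨A.1.1, (hmem _).mpr ⟨?_, A.1.2⟩⟩
      invFun := fun S => ⟨⟨S.1, ((hmem _).mp S.2).2⟩, ?_⟩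
      left_inv := fun A => by ext : 2 <;> rfl
      right_inv := fun S => rfl }
  · have hfix : σ • A.1 = A.1 := A.2
    rw [Subtype.ext_iff, gw_smul_def, finset_smul_def] at hfix
    exact (isInv_iff_image _ _).mpr hfix
  · show σ • (⟨S.1, _⟩ : GW n i) = _
    refine Subtype.ext ?_
    rw [gw_smul_def, finset_smul_def]
    exact (isInv_iff_image _ _).mp ((hmem _).mp S.2).1

noncomputable def eGW (n i : ℕ) :
    {G : SimpleGraph (Fin n) // G.edgeFinset.card = i} ≃ GW n i :=
  Equiv.subtypeEquiv (graphEquiv n) (fun G => by rw [graphEquiv_card])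

noncomputable def quotEquiv (n i : ℕ) :
    Quotient (graphIsoSetoid n i) ≃
      Quotient (MulAction.orbitRel (Equiv.Perm (Fin n)) (GW n i)) := by
  apply Quotient.congr (eGW n i)
  intro G G'
  show Nonempty (G.1 ≃g G'.1) ↔ _
  rw [MulAction.orbitRel_apply, MulAction.mem_orbit_iff]
  constructor
  · intro h
    obtain ⟨σ, hσ⟩ := (iso_iff_map G'.1 G.1).mp ⟨h.some.symm⟩
    refine ⟨σ, Subtype.ext ?_⟩
    show σ • (graphEquiv n G'.1) = graphEquiv n G.1
    rw [finset_smul_def, ← graphEquiv_map, hσ]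
  · rintro ⟨σ, hσ⟩
    have : σ • (graphEquiv n G'.1) = graphEquiv n G.1 := congrArg Subtype.val hσ
    rw [finset_smul_def, ← graphEquiv_map] at this
    have hmap : G'.1.map σ.toEmbedding = G.1 := (graphEquiv n).injective this
    obtain ⟨φ⟩ := (iso_iff_map G'.1 G.1).mpr ⟨σ, hmap⟩
    exact ⟨φ.symm⟩

lemma burnside (i : ℕ) :
    (Nat.card (Quotient (graphIsoSetoid n i))) * n.factorial =
      ∑ σ : Equiv.Perm (Fin n), ((invSets (edgePerm σ)).filter (fun S => S.card = i)).card := by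
  have hb := MulAction.sum_card_fixedBy_eq_card_orbits_mul_card_group
    (Equiv.Perm (Fin n)) (GW n i)
  rw [Fintype.card_perm, Fintype.card_fin] at hb
  have hcardq : Nat.card (Quotient (graphIsoSetoid n i)) =
      Fintype.card (Quotient (MulAction.orbitRel (Equiv.Perm (Fin n)) (GW n i))) := by
    rw [Nat.card_congr (quotEquiv n i), Nat.card_eq_fintype_card]
  rw [hcardq, ← hb]
  exact (Finset.sum_congr rfl (fun σ _ => (card_fixedBy i σ).symm)).symm

/-! ### main theorem -/

/-- Theorem 3(i) of the paper.  In the field of rational functions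
`RatFunc ℚ`, with `a i` the number of isomorphism classes of simple graphs on `n` vertices
with `i` edges and `m = |E| = n(n-1)/2`,
`n! ⬝ ∑ᵢ aᵢ Xⁱ = ∑_{σ} det(1 - X² P σ) / det(1 - X P σ)`, each denominator being nonzero. -/
theorem stmt_3 (n m : ℕ) (hm : m = Fintype.card (Edges n))
    (a : ℕ → ℕ) (ha : ∀ i, a i = Nat.card (Quotient (graphIsoSetoid n i))) :
    (∀ σ : Equiv.Perm (Fin n),
        Matrix.det (1 - (RatFunc.X : RatFunc ℚ) • permMat n (RatFunc ℚ) σ) ≠ 0) ∧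
    (n.factorial : RatFunc ℚ) *
        ∑ i ∈ Finset.range (m + 1), (a i : RatFunc ℚ) * RatFunc.X ^ i =
      ∑ σ : Equiv.Perm (Fin n),
        Matrix.det (1 - ((RatFunc.X : RatFunc ℚ) ^ 2) • permMat n (RatFunc ℚ) σ) /
          Matrix.det (1 - (RatFunc.X : RatFunc ℚ) • permMat n (RatFunc ℚ) σ) := by
  have hpm : ∀ σ : Equiv.Perm (Fin n), permMat n (RatFunc ℚ) σ = pmat (RatFunc ℚ) (edgePerm σ) :=
    fun σ => rfl
  have hne : ∀ σ : Equiv.Perm (Fin n),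
      Matrix.det (1 - (RatFunc.X : RatFunc ℚ) • permMat n (RatFunc ℚ) σ) ≠ 0 := by
    intro σ
    rw [hpm σ]
    exact det_ne_zero (edgePerm σ)
  refine ⟨hne, ?_⟩
  have hratio : ∀ σ : Equiv.Perm (Fin n),
      Matrix.det (1 - ((RatFunc.X : RatFunc ℚ) ^ 2) • permMat n (RatFunc ℚ) σ) /
          Matrix.det (1 - (RatFunc.X : RatFunc ℚ) • permMat n (RatFunc ℚ) σ) =
        ∑ S ∈ invSets (edgePerm σ), (RatFunc.X : RatFunc ℚ) ^ S.card := by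
    intro σ
    rw [hpm σ]
    rw [key (RatFunc.X : RatFunc ℚ) (Fintype.card (Edges n)) (Edges n) (edgePerm σ) le_rfl]
    exact mul_div_cancel_left₀ _ (det_ne_zero (edgePerm σ))
  rw [Finset.sum_congr rfl (fun σ _ => hratio σ)]
  rw [Finset.mul_sum]
  have hstep : ∀ i : ℕ,
      (n.factorial : RatFunc ℚ) * ((a i : RatFunc ℚ) * RatFunc.X ^ i) =
        ∑ σ : Equiv.Perm (Fin n),
          (((invSets (edgePerm σ)).filter (fun S => S.card = i)).card : RatFunc ℚ) *
            RatFunc.X ^ i := by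
    intro i
    rw [← Finset.sum_mul, ← mul_assoc]
    congr 1
    have hb := burnside (n := n) i
    rw [← ha i] at hb
    calc (n.factorial : RatFunc ℚ) * (a i : RatFunc ℚ)
        = ((a i * n.factorial : ℕ) : RatFunc ℚ) := by push_cast; ring
      _ = _ := by rw [hb]; push_cast; rfl
  rw [Finset.sum_congr rfl (fun i _ => hstep i)]
  rw [Finset.sum_comm]
  apply Finset.sum_congr rfl
  intro σ _
  rw [hm]
  exact sum_inv_card (RatFunc.X : RatFunc ℚ) (edgePerm σ) (Fintype.card (Edges n)) le_rfl
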